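/- If the inputs of the ISSP satisfy T ≥ ⌈(maxᵢ a_{i,1}) / (minᵢ (a_{i,2} − a_{i,1}))⌉ · maxᵢ a_{i,1}, with minᵢ (a_{i,2} − a_{i,1}) > 0, and T < Σᵢ a_{i,1}, then letting I ≥ 0 be the index with Σ_{i=1}^{I} a_{i,1} ≤ T < Σ_{i=1}^{I+1} a_{i,1}, one has Σ_{i=1}^{I} a_{i,2} > T; consequently the ISSP optimal value equals T. -/

import Mathlib

/-- If `T ≥ ⌈(maxᵢ a_{i,1})/(minᵢ (a_{i,2}-a_{i,1}))⌉ · maxᵢ a_{i,1}` with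
`minᵢ (a_{i,2}-a_{i,1}) > 0` and `T < Σᵢ a_{i,1}`, then for the index `I` with
`Σ_{i<I} a_{i,1} ≤ T < Σ_{i<I+1} a_{i,1}` one has `Σ_{i<I} a_{i,2} > T`, and
consequently the ISSP optimal value equals `T`. -/
theorem stmt4 (n : ℕ) (a1 a2 : ℕ → ℤ) (T M d : ℤ)
    (hpos : ∀ i < n, 0 < a1 i) (hle : ∀ i < n, a1 i ≤ a2 i)
    (hTmax : ∀ i < n, a2 i < T)
    (hMub : ∀ i < n, a1 i ≤ M) (hMmem : ∃ i < n, a1 i = M)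
    (hdlb : ∀ i < n, d ≤ a2 i - a1 i) (hdmem : ∃ i < n, a2 i - a1 i = d)
    (hd : 0 < d)
    (hT : ⌈(M : ℚ) / (d : ℚ)⌉ * M ≤ T)
    (hTlt : T < ∑ i ∈ Finset.range n, a1 i)
    (I : ℕ) (hIn : I < n)
    (hI1 : (∑ i ∈ Finset.range I, a1 i) ≤ T)
    (hI2 : T < ∑ i ∈ Finset.range (I + 1), a1 i) :
    T < (∑ i ∈ Finset.range I, a2 i) ∧
    ∃ x : ℕ → ℤ,
      (∀ i < n, x i = 0 ∨ (a1 i ≤ x i ∧ x i ≤ a2 i)) ∧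
      (∑ i ∈ Finset.range n, x i) = T := by
  have hMpos : 0 < M := by
    obtain ⟨i, hi, hie⟩ := hMmem
    exact hie ▸ hpos i hi
  have hsub : ∀ i < I, i < n := fun i h => h.trans hIn
  set S1 := ∑ i ∈ Finset.range I, a1 i with hS1
  have hTS1 : T - S1 < M := by
    rw [Finset.sum_range_succ] at hI2
    have := hMub I hIn
    omega
  have hS1le : S1 ≤ (I : ℤ) * M := by
    calc S1 ≤ ∑ _i ∈ Finset.range I, M :=
          Finset.sum_le_sum (fun i hi => hMub i (hsub i (Finset.mem_range.mp hi)))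
      _ = (I : ℤ) * M := by simp [mul_comm]
  have hC : ⌈(M : ℚ) / (d : ℚ)⌉ ≤ (I : ℤ) := by
    by_contra h
    push_neg at h
    have h1 : (I : ℤ) + 1 ≤ ⌈(M : ℚ) / (d : ℚ)⌉ := h
    have h2 : ((I : ℤ) + 1) * M ≤ T :=
      le_trans (mul_le_mul_of_nonneg_right h1 hMpos.le) hT
    rw [Finset.sum_range_succ] at hI2
    have hM := hMub I hIn
    nlinarith
  have hMId : M ≤ (I : ℤ) * d := by
    have hle1 : (M : ℚ) / (d : ℚ) ≤ (⌈(M : ℚ) / (d : ℚ)⌉ : ℚ) := Int.le_ceil _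
    have hdq : (0 : ℚ) < (d : ℚ) := by exact_mod_cast hd
    rw [div_le_iff₀ hdq] at hle1
    have hz : M ≤ ⌈(M : ℚ) / (d : ℚ)⌉ * d := by exact_mod_cast hle1
    calc M ≤ ⌈(M : ℚ) / (d : ℚ)⌉ * d := hz
      _ ≤ (I : ℤ) * d := mul_le_mul_of_nonneg_right hC hd.le
  have hS2 : T < ∑ i ∈ Finset.range I, a2 i := by
    have h1 : ∑ i ∈ Finset.range I, (a1 i + d) ≤ ∑ i ∈ Finset.range I, a2 i :=
      Finset.sum_le_sum (fun i hi => by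
        have := hdlb i (hsub i (Finset.mem_range.mp hi)); linarith)
    have h2 : ∑ i ∈ Finset.range I, (a1 i + d) = S1 + (I : ℤ) * d := by
      rw [Finset.sum_add_distrib, Finset.sum_const, Finset.card_range, nsmul_eq_mul]
    linarith
  refine ⟨hS2, ?_⟩
  set r := T - S1 with hr
  have hr0 : 0 ≤ r := by omega
  set P := fun k => ∑ j ∈ Finset.range k, (a2 j - a1 j) with hP
  set x := fun i => if i < I then a1 i + min (a2 i - a1 i) (max 0 (r - P i)) else 0 with hx
  have hb0 : ∀ i < I, 0 ≤ a2 i - a1 i := fun i hi => by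
    have := hle i (hsub i hi); omega
  have key : ∀ k ≤ I,
      ∑ i ∈ Finset.range k, min (a2 i - a1 i) (max 0 (r - P i)) = min r (P k) := by
    intro k hk
    induction k with
    | zero => simp [hP]; omega
    | succ k ih =>
      have hkI : k < I := hk
      rw [Finset.sum_range_succ, ih (le_of_lt hkI)]
      have hPk : P (k + 1) = P k + (a2 k - a1 k) := by
        simp [hP, Finset.sum_range_succ]; ring
      have hbk := hb0 k hkI
      omega
  have hPI : r < P I := by
    have : P I = (∑ i ∈ Finset.range I, a2 i) - S1 := by
      simp [hP, Finset.sum_sub_distrib, hS1]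
    omega
  refine ⟨x, ?_, ?_⟩
  · intro i hi
    by_cases h : i < I
    · right
      have hbi := hb0 i h
      simp only [hx, if_pos h]
      omega
    · left
      simp [hx, h]
  · have hzero : ∀ i ∈ Finset.range n, i ∉ Finset.range I → x i = 0 := by
      intro i _ hiI
      simp only [Finset.mem_range] at hiI
      simp [hx, hiI]
    rw [← Finset.sum_subset (Finset.range_subset_range.mpr hIn.le) hzero]
    have : ∑ i ∈ Finset.range I, x i
        = S1 + ∑ i ∈ Finset.range I, min (a2 i - a1 i) (max 0 (r - P i)) := by
      simp only [hx]
      rw [← Finset.sum_add_distrib]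
      apply Finset.sum_congr rfl
      intro i hi
      rw [if_pos (Finset.mem_range.mp hi)]
    rw [this, key I le_rfl]
    omega
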